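/- Let v be a complex number satisfying the quadratic relation (σ²/2μ)v² - (γ/√s)v + iu/s = E where E = O(v²/√s) + O(v³), with μ, σ², γ, s > 0 and u real with |u| = o(s). Then v = (γμ/(σ²√s)) ± (γμ/(σ²√s))(1 - 2iuσ²/(γ²μ))^{1/2} + O((|v|² + |v|³√s)/√(1+|u|)). -/

import Mathlib

open Filter Asymptotics

lemma cpow_half_sq (z : ℂ) : (z ^ (1/2 : ℂ)) ^ 2 = z := by
  rcases eq_or_ne z 0 with h | h
  · simp [h, Complex.zero_cpow (by norm_num : (1/2:ℂ) ≠ 0)]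
  · rw [sq, ← Complex.cpow_add _ _ h]; norm_num

lemma re_half (z : ℂ) (hz : z ≠ 0) :
    (z ^ (1/2:ℂ)).re = Real.sqrt (‖z‖) * Real.cos (Complex.arg z / 2) := by
  have hx : (0:ℝ) < ‖z‖ := norm_pos_iff.mpr hz
  rw [Complex.cpow_def_of_ne_zero hz, Complex.exp_re]
  have h1 : (Complex.log z * (1/2)).re = Real.log (‖z‖) * (1/2) := by
    simp [Complex.mul_re, Complex.log_re]
  have h2 : (Complex.log z * (1/2)).im = Complex.arg z / 2 := by
    simp [Complex.mul_im, Complex.log_im]; ring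
  rw [h1, h2, Real.sqrt_eq_rpow, Real.rpow_def_of_pos hx]

lemma re_half_nonneg (z : ℂ) : 0 ≤ (z ^ (1/2:ℂ)).re := by
  rcases eq_or_ne z 0 with h | h
  · simp [h, Complex.zero_cpow (by norm_num : (1/2:ℂ) ≠ 0)]
  · rw [re_half z h]
    refine mul_nonneg (Real.sqrt_nonneg _) (Real.cos_nonneg_of_mem_Icc ⟨?_, ?_⟩)
    · have := Complex.neg_pi_lt_arg z; linarith
    · have := Complex.arg_le_pi z; have := Real.pi_pos; linarith

lemma re_half_ge (z : ℂ) (hz : 0 < z.re) :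
    Real.sqrt (‖z‖) * (Real.sqrt 2 / 2) ≤ (z ^ (1/2:ℂ)).re := by
  have hz0 : z ≠ 0 := by intro h; rw [h] at hz; simp at hz
  rw [re_half z hz0]
  have harg : |Complex.arg z| < Real.pi/2 := Complex.abs_arg_lt_pi_div_two_iff.mpr (Or.inl hz)
  have hcos : Real.sqrt 2/2 ≤ Real.cos (Complex.arg z / 2) := by
    rw [← Real.cos_pi_div_four, ← Real.cos_abs (Complex.arg z / 2)]
    apply Real.cos_le_cos_of_nonneg_of_le_pi (abs_nonneg _)
    · have := Real.pi_pos; linarith [abs_le.mp (le_of_lt harg)]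
    · rw [abs_div]
      have : |Complex.arg z| / |(2:ℝ)| ≤ Real.pi/4 := by
        rw [abs_two]; linarith
      exact this.trans (by linarith [Real.pi_pos])
  exact mul_le_mul_of_nonneg_left hcos (Real.sqrt_nonneg _)

/-- Completing-the-square step (A.7)–(A.8): if `v = v(s)` satisfies
`(σ²/2μ)v² - (γ/√s)v + iu/s = E` with `E = O(v²/√s) + O(v³)` and `|u| = o(s)`, then
`v = (γμ/(σ²√s))(1 ± (1 - 2iuσ²/(γ²μ))^{1/2}) + O((|v|² + |v|³√s)/√(1+|u|))`. -/
theorem completing_square (μ σ2 γ : ℝ) (hμ : 0 < μ) (hσ : 0 < σ2) (hγ : 0 < γ)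
    (v E : ℝ → ℂ) (u : ℝ → ℝ)
    (hrel : ∀ s : ℝ, 0 < s →
      ((σ2 / (2 * μ) : ℝ) : ℂ) * (v s) ^ 2 - ((γ / Real.sqrt s : ℝ) : ℂ) * v s +
        Complex.I * (u s) / s = E s)
    (hE : ∃ C : ℝ, ∀ s : ℝ, 1 ≤ s →
      ‖E s‖ ≤ C * (‖v s‖ ^ 2 / Real.sqrt s + ‖v s‖ ^ 3))
    (hu : (fun s => u s) =o[atTop] fun s : ℝ => s) :
    ∃ C : ℝ, ∀ᶠ s in atTop, ∃ ε : ℂ, (ε = 1 ∨ ε = -1) ∧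
      ‖v s - (((γ * μ / (σ2 * Real.sqrt s) : ℝ) : ℂ) +
          ε * ((γ * μ / (σ2 * Real.sqrt s) : ℝ) : ℂ) *
            (1 - 2 * Complex.I * (u s) * σ2 / (γ ^ 2 * μ)) ^ (1 / 2 : ℂ))‖ ≤
        C * (‖v s‖ ^ 2 + ‖v s‖ ^ 3 * Real.sqrt s) / Real.sqrt (1 + |u s|) := by
  obtain ⟨C, hC⟩ := hE
  set k : ℝ := 2 * σ2 / (γ ^ 2 * μ) with hk
  have hk0 : 0 < k := by positivity
  set m : ℝ := min 1 k / 2 with hm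
  have hm0 : 0 < m := by positivity
  refine ⟨4 * max C 0 / (γ * Real.sqrt 2 * Real.sqrt m), ?_⟩
  filter_upwards [eventually_ge_atTop 1] with s hs1
  have hs0 : (0:ℝ) < s := lt_of_lt_of_le one_pos hs1
  have hss0 : 0 < Real.sqrt s := Real.sqrt_pos.mpr hs0
  set R : ℂ := 1 - 2 * Complex.I * (u s) * σ2 / (γ ^ 2 * μ) with hR
  have hsC : (s:ℂ) = (Real.sqrt s : ℂ) * (Real.sqrt s : ℂ) := by
    norm_cast
    exact (Real.mul_self_sqrt hs0.le).symm
  have hμ' : (μ:ℂ) ≠ 0 := by exact_mod_cast hμ.ne'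
  have hσ' : (σ2:ℂ) ≠ 0 := by exact_mod_cast hσ.ne'
  have hγ' : (γ:ℂ) ≠ 0 := by exact_mod_cast hγ.ne'
  have hss' : ((Real.sqrt s : ℝ):ℂ) ≠ 0 := by exact_mod_cast hss0.ne'
  set rr : ℝ := γ * μ / (σ2 * Real.sqrt s) with hrr
  have hrr0 : 0 < rr := by positivity
  have key : (v s - ((rr : ℝ):ℂ))^2
      = ((rr : ℝ):ℂ)^2 * R + E s / ((σ2/(2*μ):ℝ):ℂ) := by
    have h0 := hrel s hs0
    push_cast at h0
    rw [hsC] at h0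
    field_simp at h0
    ring_nf at h0
    rw [hR, hrr]
    push_cast
    field_simp
    linear_combination (σ2:ℂ) * h0
  set X : ℂ := (((rr : ℝ):ℂ)^2 * R + E s / ((σ2/(2*μ):ℝ):ℂ)) ^ (1/2 : ℂ) with hXdef
  set W : ℂ := R ^ (1/2 : ℂ) with hWdef
  have hX2 : X ^ 2 = ((rr : ℝ):ℂ)^2 * R + E s / ((σ2/(2*μ):ℝ):ℂ) := cpow_half_sq _
  have hW2 : W ^ 2 = R := cpow_half_sq _
  have hfac : (v s - rr - X) * (v s - rr + X) = 0 := by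
    linear_combination key - hX2
  -- R facts
  have hRalt : R = 1 - ((k * u s : ℝ):ℂ) * Complex.I := by
    rw [hR, hk]; push_cast; ring
  have hRre : R.re = 1 := by rw [hRalt]; simp
  have hRim : R.im = -(k * u s) := by rw [hRalt]; simp
  have habs1 : 1 ≤ ‖R‖ := by
    have h := Complex.abs_re_le_norm R
    rw [hRre] at h; simpa using h
  have habs2 : k * |u s| ≤ ‖R‖ := by
    have h := Complex.abs_im_le_norm R
    rw [hRim, abs_neg, abs_mul, abs_of_pos hk0] at h
    exact h
  have hmR : m * (1 + |u s|) ≤ ‖R‖ := by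
    have h1 : min 1 k ≤ 1 := min_le_left _ _
    have h2 : min 1 k ≤ k := min_le_right _ _
    have h3 : 0 ≤ |u s| := abs_nonneg _
    rw [hm]
    nlinarith
  have hWre : Real.sqrt m * Real.sqrt (1 + |u s|) * (Real.sqrt 2 / 2) ≤ W.re := by
    have h1 := re_half_ge R (by rw [hRre]; norm_num)
    have h2 : Real.sqrt m * Real.sqrt (1 + |u s|) ≤ Real.sqrt (‖R‖) := by
      rw [← Real.sqrt_mul hm0.le]
      exact Real.sqrt_le_sqrt hmR
    calc Real.sqrt m * Real.sqrt (1 + |u s|) * (Real.sqrt 2 / 2)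
        ≤ Real.sqrt (‖R‖) * (Real.sqrt 2 / 2) := by
          apply mul_le_mul_of_nonneg_right h2 (by positivity)
      _ ≤ W.re := h1
  have hXre : 0 ≤ X.re := re_half_nonneg _
  set L : ℝ := rr * (Real.sqrt m * Real.sqrt (1 + |u s|) * (Real.sqrt 2 / 2)) with hL
  have hL0 : 0 < L := by
    rw [hL]
    have : 0 < Real.sqrt (1 + |u s|) := Real.sqrt_pos.mpr (by positivity)
    positivity
  have hsum : L ≤ ‖X + ((rr:ℝ):ℂ) * W‖ := by
    have hre : (X + ((rr:ℝ):ℂ) * W).re = X.re + rr * W.re := by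
      simp [Complex.add_re, Complex.mul_re]
    calc L ≤ rr * W.re := by
            rw [hL]; exact mul_le_mul_of_nonneg_left hWre hrr0.le
      _ ≤ X.re + rr * W.re := by linarith
      _ = (X + ((rr:ℝ):ℂ) * W).re := hre.symm
      _ ≤ ‖X + ((rr:ℝ):ℂ) * W‖ := Complex.re_le_norm _
  have hprod : (X - ((rr:ℝ):ℂ) * W) * (X + ((rr:ℝ):ℂ) * W) = E s / ((σ2/(2*μ):ℝ):ℂ) := by
    linear_combination hX2 - ((rr:ℝ):ℂ)^2 * hW2
  have hA0 : (0:ℝ) < σ2 / (2*μ) := by positivity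
  have hnormprod : ‖X - ((rr:ℝ):ℂ) * W‖ * ‖X + ((rr:ℝ):ℂ) * W‖
      = ‖E s‖ / (σ2 / (2*μ)) := by
    rw [← norm_mul, hprod, norm_div, Complex.norm_real, Real.norm_of_nonneg hA0.le]
  have hmain : ‖X - ((rr:ℝ):ℂ) * W‖ ≤ (‖E s‖ / (σ2/(2*μ))) / L := by
    rw [le_div_iff₀ hL0, ← hnormprod]
    exact mul_le_mul_of_nonneg_left hsum (norm_nonneg _)
  -- bound on E
  have hEb : ‖E s‖ ≤ max C 0 * ((‖v s‖^2 + ‖v s‖^3 * Real.sqrt s) / Real.sqrt s) := by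
    have h1 := hC s hs1
    have h2 : C * (‖v s‖ ^ 2 / Real.sqrt s + ‖v s‖ ^ 3)
        ≤ max C 0 * (‖v s‖ ^ 2 / Real.sqrt s + ‖v s‖ ^ 3) :=
      mul_le_mul_of_nonneg_right (le_max_left _ _) (by positivity)
    have h3 : (‖v s‖ ^ 2 / Real.sqrt s + ‖v s‖ ^ 3)
        = (‖v s‖^2 + ‖v s‖^3 * Real.sqrt s) / Real.sqrt s := by
      field_simp
    rw [← h3]
    calc ‖E s‖ = ‖E s‖ := rfl
      _ ≤ _ := h1.trans h2
  have hfinal : (‖E s‖ / (σ2/(2*μ))) / L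
      ≤ 4 * max C 0 / (γ * Real.sqrt 2 * Real.sqrt m) *
          (‖v s‖ ^ 2 + ‖v s‖ ^ 3 * Real.sqrt s) / Real.sqrt (1 + |u s|) := by
    have heq : (max C 0 * ((‖v s‖^2 + ‖v s‖^3 * Real.sqrt s) / Real.sqrt s) / (σ2/(2*μ))) / L
        = 4 * max C 0 / (γ * Real.sqrt 2 * Real.sqrt m) *
          (‖v s‖ ^ 2 + ‖v s‖ ^ 3 * Real.sqrt s) / Real.sqrt (1 + |u s|) := by
      rw [hL, hrr]
      have h2 : Real.sqrt 2 ≠ 0 := by positivity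
      have h3 : Real.sqrt m ≠ 0 := by positivity
      have h4 : Real.sqrt (1 + |u s|) ≠ 0 := by
        have : 0 < Real.sqrt (1 + |u s|) := Real.sqrt_pos.mpr (by positivity)
        exact this.ne'
      field_simp
      ring
    rw [← heq]
    gcongr
  -- choose the sign
  rcases mul_eq_zero.mp hfac with h | h
  · refine ⟨1, Or.inl rfl, ?_⟩
    have hv : v s - (((rr:ℝ):ℂ) + 1 * ((rr:ℝ):ℂ) * W) = X - ((rr:ℝ):ℂ) * W := by
      have : v s - ((rr:ℝ):ℂ) = X := by linear_combination h
      linear_combination this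
    rw [hv]
    calc ‖X - ((rr:ℝ):ℂ) * W‖ = ‖X - ((rr:ℝ):ℂ) * W‖ := rfl
      _ ≤ _ := hmain.trans hfinal
  · refine ⟨-1, Or.inr rfl, ?_⟩
    have hv : v s - (((rr:ℝ):ℂ) + (-1) * ((rr:ℝ):ℂ) * W) = -(X - ((rr:ℝ):ℂ) * W) := by
      have : v s - ((rr:ℝ):ℂ) = -X := by linear_combination h
      linear_combination this
    rw [hv, norm_neg]
    calc ‖X - ((rr:ℝ):ℂ) * W‖ = ‖X - ((rr:ℝ):ℂ) * W‖ := rfl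
      _ ≤ _ := hmain.trans hfinal
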